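/- For each n ≥ 1 and each fixed b < 0, the polynomial a ↦ P_n(a,b) has n-1 distinct real roots, where P_n is defined by P_{n+2} = aP_{n+1} + bP_n, P_0 = 0, P_1 = 1. -/

import Mathlib

/-- `Pr n a b` is defined by `Pr 0 = 0`, `Pr 1 = 1`,
`Pr (n+2) = a * Pr (n+1) + b * Pr n`. -/
def Pr : ℕ → ℝ → ℝ → ℝ
  | 0, _, _ => 0
  | 1, _, _ => 1
  | (n + 2), a, b => a * Pr (n + 1) a b + b * Pr n a b

open Real

lemma pr_trig (c θ : ℝ) : ∀ n : ℕ,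
    Pr (n + 1) (2 * c * Real.cos θ) (-(c ^ 2)) * Real.sin θ
      = c ^ n * Real.sin (((n : ℝ) + 1) * θ) := by
  intro n
  induction n using Nat.twoStepInduction with
  | zero => simp [Pr]
  | one =>
    simp only [Pr]
    push_cast
    rw [show ((1 : ℝ) + 1) * θ = θ + θ by ring, Real.sin_add]
    ring
  | more n ih1 ih2 =>
    show (_ * Pr (n + 2) _ _ + _ * Pr (n + 1) _ _) * Real.sin θ = _
    push_cast at ih1 ih2 ⊢
    rw [show ((n : ℝ) + 2 + 1) * θ = ((n : ℝ) + 1 + 1) * θ + θ by ring, Real.sin_add]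
    rw [show ((n : ℝ) + 1) * θ = ((n : ℝ) + 1 + 1) * θ - θ by ring, Real.sin_sub] at ih1
    linear_combination (2 * c * Real.cos θ) * ih2 + (-(c ^ 2)) * ih1

lemma pr_growth (c a : ℝ) (hc : 0 < c) (ha : 2 * c ≤ a) : ∀ n : ℕ,
    c * Pr (n + 1) a (-(c ^ 2)) ≤ Pr (n + 2) a (-(c ^ 2)) ∧
      c ^ n ≤ Pr (n + 1) a (-(c ^ 2)) := by
  intro n
  induction n with
  | zero => refine ⟨?_, ?_⟩ <;> simp [Pr] <;> nlinarith
  | succ n ih =>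
    obtain ⟨h1, h2⟩ := ih
    have hpos : 0 < Pr (n + 1) a (-(c ^ 2)) := lt_of_lt_of_le (pow_pos hc n) h2
    have hpos2 : 0 < Pr (n + 2) a (-(c ^ 2)) := by nlinarith
    constructor
    · show c * _ ≤ a * Pr (n + 2) a _ + (-(c^2)) * Pr (n + 1) a _
      nlinarith
    · calc c ^ (n + 1) = c * c ^ n := by ring
        _ ≤ c * Pr (n + 1) a (-(c ^ 2)) := by nlinarith
        _ ≤ Pr (n + 2) a (-(c ^ 2)) := h1

lemma pr_parity (a b : ℝ) : ∀ n : ℕ, Pr (n + 1) (-a) b = (-1) ^ n * Pr (n + 1) a b := by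
  intro n
  induction n using Nat.twoStepInduction with
  | zero => simp [Pr]
  | one => simp [Pr]
  | more n ih1 ih2 =>
    show -a * Pr (n + 2) (-a) b + b * Pr (n + 1) (-a) b = _
    rw [ih1, ih2]
    show _ = (-1) ^ (n + 2) * (a * Pr (n + 2) a b + b * Pr (n + 1) a b)
    ring

theorem stmt_11 (n : ℕ) (hn : 1 ≤ n) (b : ℝ) (hb : b < 0) :
    ∃ s : Finset ℝ, s.card = n - 1 ∧ ∀ a : ℝ, Pr n a b = 0 ↔ a ∈ s := by
  obtain ⟨m, rfl⟩ : ∃ m, n = m + 1 := ⟨n - 1, (Nat.succ_pred_eq_of_pos hn).symm⟩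
  obtain ⟨c, hc, rfl⟩ : ∃ c, 0 < c ∧ b = -(c ^ 2) := by
    refine ⟨Real.sqrt (-b), Real.sqrt_pos.2 (by linarith), ?_⟩
    rw [Real.sq_sqrt (by linarith : (0:ℝ) ≤ -b)]; ring
  have hπ := Real.pi_pos
  have hm1 : (0:ℝ) < (m:ℝ) + 1 := by positivity
  have hθ : ∀ k : ℕ, k ∈ Finset.Icc 1 m →
      0 < (k:ℝ) * π / ((m:ℝ) + 1) ∧ (k:ℝ) * π / ((m:ℝ) + 1) < π := by
    intro k hk
    rw [Finset.mem_Icc] at hk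
    have h1 : (1:ℝ) ≤ (k:ℝ) := by exact_mod_cast hk.1
    have h2 : (k:ℝ) ≤ (m:ℝ) := by exact_mod_cast hk.2
    constructor
    · positivity
    · rw [div_lt_iff₀ hm1]; nlinarith
  refine ⟨(Finset.Icc 1 m).image (fun k : ℕ => 2 * c * Real.cos ((k:ℝ) * π / ((m:ℝ) + 1))),
    ?_, ?_⟩
  · rw [Finset.card_image_of_injOn, Nat.card_Icc]
    intro k hk l hl h
    simp only at h
    have hkθ := hθ k hk
    have hlθ := hθ l hl
    have hco : Real.cos ((k:ℝ) * π / ((m:ℝ) + 1)) = Real.cos ((l:ℝ) * π / ((m:ℝ) + 1)) :=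
      mul_left_cancel₀ (show (2*c) ≠ 0 by positivity) h
    have := Real.injOn_cos ⟨le_of_lt hkθ.1, le_of_lt hkθ.2⟩ ⟨le_of_lt hlθ.1, le_of_lt hlθ.2⟩ hco
    field_simp at this
    exact_mod_cast this
  · intro a
    constructor
    · intro ha
      rcases le_or_gt (2*c) a with h | h
      · exfalso
        have := (pr_growth c a hc h m).2
        have := pow_pos hc m
        linarith
      rcases le_or_gt a (-(2*c)) with h' | h'
      · exfalso
        have hg := (pr_growth c (-a) hc (by linarith) m).2
        have hp := pr_parity a (-(c^2)) m
        rw [ha, mul_zero] at hp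
        have := pow_pos hc m
        linarith [hp ▸ hg]
      · -- -2c < a < 2c
        have h2c : (0:ℝ) < 2*c := by linarith
        have h1 : -1 < a / (2*c) := by rw [lt_div_iff₀ h2c]; linarith
        have h2 : a / (2*c) < 1 := by rw [div_lt_iff₀ h2c]; linarith
        set θ := Real.arccos (a / (2*c)) with hθdef
        have hcos : Real.cos θ = a / (2*c) := Real.cos_arccos (le_of_lt h1) (le_of_lt h2)
        have ha' : a = 2 * c * Real.cos θ := by rw [hcos]; field_simp
        have hθ1 : 0 < θ := Real.arccos_pos.2 h2
        have hθ2 : θ < π := lt_of_le_of_ne (Real.arccos_le_pi _)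
          (fun he => absurd (Real.arccos_eq_pi.1 he) (by linarith))
        have hsin : 0 < Real.sin θ := Real.sin_pos_of_pos_of_lt_pi hθ1 hθ2
        have htrig := pr_trig c θ m
        rw [← ha', ha, zero_mul] at htrig
        have hsz : Real.sin (((m:ℝ) + 1) * θ) = 0 := by
          have := pow_pos hc m
          rcases mul_eq_zero.1 htrig.symm with h | h
          · linarith
          · exact h
        rw [Real.sin_eq_zero_iff] at hsz
        obtain ⟨k, hk⟩ := hsz
        have hk0 : 0 < (k:ℝ) := by nlinarith
        have hkm : (k:ℝ) < (m:ℝ) + 1 := by nlinarith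
        have hk0' : 0 < k := by exact_mod_cast hk0
        have hkm' : k ≤ (m:ℤ) := by
          have : k < (m:ℤ) + 1 := by exact_mod_cast hkm
          omega
        refine Finset.mem_image.2 ⟨k.toNat, ?_, ?_⟩
        · rw [Finset.mem_Icc]
          omega
        · have hθeq : ((k.toNat : ℕ) : ℝ) * π / ((m:ℝ) + 1) = θ := by
            have h1 : ((k.toNat : ℕ) : ℝ) = (k:ℝ) := by
              exact_mod_cast Int.toNat_of_nonneg hk0'.le
            rw [h1]
            field_simp
            linear_combination hk
          show 2 * c * Real.cos _ = a
          rw [hθeq, ← ha']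
    · intro ha
      obtain ⟨k, hk, rfl⟩ := Finset.mem_image.1 ha
      set θ := (k:ℝ) * π / ((m:ℝ) + 1) with hθdef
      obtain ⟨hθ1, hθ2⟩ := hθ k hk
      have hsin : 0 < Real.sin θ := Real.sin_pos_of_pos_of_lt_pi hθ1 hθ2
      have htrig := pr_trig c θ m
      have harg : ((m:ℝ) + 1) * θ = (k:ℝ) * π := by
        rw [hθdef]; field_simp
      rw [harg, Real.sin_nat_mul_pi, mul_zero] at htrig
      exact (mul_eq_zero.1 htrig).resolve_right (ne_of_gt hsin)
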